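/- Let ξ_r be an r-region plan of G with r > 1 and W(ξ_r) > 0, let Z > 0, and define f(ξ_r) = Σ_{ξ_{r-1} ∈ A₁(ξ_r)} (γ(ξ_{r-1})/Z) · M(ξ_r | ξ_{r-1}). Assume S := Σ_{{G_k, G_{k'}} ∈ AR(ξ_r)} φ(G[V_k ∪ V_{k'}] | ξ̃_{r-1}) · (W(ξ̃_{r-1})/W(ξ_r)) · (τ(G[V_k ∪ V_{k'}]) / (τ(G_k) · τ(G_{k'})))^{ρ−1} · |C(G_k, G_{k'})| is nonzero, where for each adjacent pair the plan ξ̃_{r-1} is obtained from ξ_r by replacing the blocks V_k and V_{k'} with V_k ∪ V_{k'}. Then γ(ξ_r)/(Z · f(ξ_r)) = K · S^{-1}. -/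

import Mathlib

open SimpleGraph

namespace Redist

variable {V : Type*} [Fintype V] [DecidableEq V]

/-- The subgraph of `G` induced by the vertex set `s` (the graph `G[s]`). -/
abbrev ind (G : SimpleGraph V) (s : Set V) : G.Subgraph :=
  (⊤ : G.Subgraph).induce s

/-- `T` is a spanning tree of the subgraph `H` of `G`. -/
def IsSpanningTreeOf (G : SimpleGraph V) (T H : G.Subgraph) : Prop :=
  T ≤ H ∧ T.verts = H.verts ∧ T.coe.IsTree

/-- `τ H`: the number of spanning trees of the subgraph `H`. -/
noncomputable def tau (G : SimpleGraph V) (H : G.Subgraph) : ℕ :=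
  {T : G.Subgraph | IsSpanningTreeOf G T H}.ncard

/-- `C(s, t)`: the set of edges of `G` with one endpoint in `s` and the other in `t`. -/
def crossEdges (G : SimpleGraph V) (s t : Set V) : Set (Sym2 V) :=
  {e | e ∈ G.edgeSet ∧ ∃ u v : V, e = s(u, v) ∧ u ∈ s ∧ v ∈ t}

/-- The subgraph obtained from `H` by adding the edges in `E'` (that are edges of `G`). -/
def withEdges (G : SimpleGraph V) (H : G.Subgraph) (E' : Set (Sym2 V)) : G.Subgraph where
  verts := H.verts ∪ {v | ∃ e ∈ E' ∩ G.edgeSet, v ∈ e}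
  Adj u v := H.Adj u v ∨ (s(u, v) ∈ E' ∧ G.Adj u v)
  adj_sub := by
    rintro u v (h | ⟨-, h⟩)
    · exact H.adj_sub h
    · exact h
  edge_vert := by
    rintro u v (h | ⟨h, hG⟩)
    · exact Or.inl (H.edge_vert h)
    · exact Or.inr ⟨s(u, v), ⟨h, hG⟩, Sym2.mem_mk_left u v⟩
  symm := by
    constructor
    rintro u v (h | ⟨h, hG⟩)
    · exact Or.inl (H.adj_symm h)
    · exact Or.inr ⟨by rwa [Sym2.eq_swap], hG.symm⟩

/-- A plan with `r` regions: a partition of the vertex set into `r` nonempty blocks,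
each inducing a connected subgraph. -/
structure Plan (G : SimpleGraph V) (r : ℕ) where
  blocks : Set (Set V)
  ncard_blocks : blocks.ncard = r
  blocks_nonempty : ∀ B ∈ blocks, B.Nonempty
  blocks_disjoint : ∀ B ∈ blocks, ∀ B' ∈ blocks, B ≠ B' → Disjoint B B'
  blocks_cover : ∀ v : V, ∃ B ∈ blocks, v ∈ B
  blocks_connected : ∀ B ∈ blocks, (ind G B).Connected

/-- `ξp` is a 1-region ancestor of `ξr`: exactly one region of `ξp` is not a region of `ξr`. -/
def IsAncestor (G : SimpleGraph V) {r : ℕ} (ξp : Plan G (r - 1)) (ξr : Plan G r) : Prop :=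
  (ξp.blocks \ ξr.blocks).ncard = 1

/-- An `r`-region forest plan: `r` vertex-disjoint trees covering all of `V`. -/
structure ForestPlan (G : SimpleGraph V) (r : ℕ) where
  trees : Set G.Subgraph
  ncard_trees : trees.ncard = r
  isTree : ∀ T ∈ trees, T.coe.IsTree
  trees_disjoint : ∀ T ∈ trees, ∀ T' ∈ trees, T ≠ T' → Disjoint T.verts T'.verts
  trees_cover : ∀ v : V, ∃ T ∈ trees, v ∈ T.verts

/-- The induced plan of a forest plan (as a family of blocks). -/
def forestBlocks (G : SimpleGraph V) {r : ℕ} (F : ForestPlan G r) : Set (Set V) :=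
  Subgraph.verts '' F.trees

/-- `Fp` is a 1-region tree ancestor of `Fr`. -/
def ForestAncestor (G : SimpleGraph V) {r : ℕ} (Fp : ForestPlan G (r - 1))
    (Fr : ForestPlan G r) : Prop :=
  (Fp.trees \ Fr.trees).ncard = 1

variable {A : Type*}

/-- The set of administrative units meeting the vertex set `s`. -/
def unitSet (η : V → A) (s : Set V) : Set A := {a | (s ∩ η ⁻¹' {a}).Nonempty}

/-- A block is hierarchically connected: its intersection with each administrative unit has
at most one connected component. -/
def HierConnectedBlock (G : SimpleGraph V) (η : V → A) (B : Set V) : Prop :=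
  ∀ a : A, (ind G (B ∩ η ⁻¹' {a})).coe.Preconnected

/-- `T` is an `η`-hierarchical tree on the region induced by `B`. -/
def IsHierTree (G : SimpleGraph V) (η : V → A) (T : G.Subgraph) (B : Set V) : Prop :=
  IsSpanningTreeOf G T (ind G B) ∧
    ∀ a : A, (B ∩ η ⁻¹' {a}).Nonempty →
      IsSpanningTreeOf G (T.induce (B ∩ η ⁻¹' {a})) (ind G (B ∩ η ⁻¹' {a}))

/-- Two blocks are administratively adjacent. -/
def AdminAdj (G : SimpleGraph V) (η : V → A) (B B' : Set V) : Prop :=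
  ∃ a : A, ∃ u v : V, G.Adj u v ∧ u ∈ B ∩ η ⁻¹' {a} ∧ v ∈ B' ∩ η ⁻¹' {a}

/-- `S` is (the set of regions of) a connected component of the administrative adjacency
graph of the plan with blocks `blocks`. -/
def IsAdminComponent (G : SimpleGraph V) (η : V → A) (blocks S : Set (Set V)) : Prop :=
  S ⊆ blocks ∧ S.Nonempty ∧
    (∀ B ∈ S, ∀ B' ∈ S,
      Relation.ReflTransGen (fun X Y => X ∈ S ∧ Y ∈ S ∧ AdminAdj G η X Y) B B') ∧
    ∀ B ∈ S, ∀ B' ∈ blocks, B' ∉ S → ¬AdminAdj G η B B'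

/-- The number of connected components of the subgraph induced by `s`. -/
noncomputable def numComponents (G : SimpleGraph V) (s : Set V) : ℕ :=
  Nat.card ((ind G s).coe.ConnectedComponent)

/-- The number of administrative splits of a family `S` of blocks. -/
noncomputable def splits [Fintype A] (G : SimpleGraph V) (η : V → A) (S : Set (Set V)) : ℕ :=
  (∑ᶠ a : A, ∑ᶠ B ∈ S, numComponents G (B ∩ η ⁻¹' {a})) -
    {a : A | ∃ B ∈ S, (B ∩ η ⁻¹' {a}).Nonempty}.ncard

/-- `T` is a hierarchical plan tree for the plan with blocks `blocks`. -/
def IsHierPlanTree (G : SimpleGraph V) (η : V → A) (T : G.Subgraph)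
    (blocks : Set (Set V)) : Prop :=
  IsHierTree G η T Set.univ ∧ ∀ B ∈ blocks, IsHierTree G η (T.induce B) B

/-- The plan with blocks `blocks` is hierarchical. -/
def IsHierPlanBlocks (G : SimpleGraph V) (η : V → A) (blocks : Set (Set V)) : Prop :=
  ∃ T : G.Subgraph, IsHierPlanTree G η T blocks

/-- The effective region tree boundary length between two vertex-disjoint trees. -/
noncomputable def EffB (G : SimpleGraph V) (p : G.Subgraph → Sym2 V → ℝ)
    (Tk Tk' : G.Subgraph) : ℝ :=
  ∑ᶠ e ∈ crossEdges G Tk.verts Tk'.verts, p (withEdges G (Tk ⊔ Tk') {e}) e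


/-! ### Auxiliary lemmas -/

private lemma reachable_of_walk_delete' {α : Type*} {H : SimpleGraph α} {v w : α}
    (hvw : (H \ fromEdgeSet {s(v,w)}).Reachable v w) :
    ∀ {x y : α}, H.Walk x y → (H \ fromEdgeSet {s(v,w)}).Reachable x y := by
  intro x y p
  induction p with
  | nil => exact Reachable.refl _
  | @cons a b c h p ih =>
    refine Reachable.trans ?_ ih
    by_cases he : s(a, b) = s(v, w)
    · rw [Sym2.eq_iff] at he
      rcases he with ⟨rfl, rfl⟩ | ⟨rfl, rfl⟩
      · exact hvw
      · exact hvw.symm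
    · exact Adj.reachable (by
        simp only [sdiff_adj, fromEdgeSet_adj, Set.mem_singleton_iff]
        exact ⟨h, fun hc => he hc.1⟩)

private lemma exists_tree_le' {α : Type*} [Finite α] {H : SimpleGraph α} (hc : H.Connected) :
    ∃ T ≤ H, T.IsTree := by
  classical
  cases nonempty_fintype α
  generalize hn : H.edgeSet.ncard = n
  induction n using Nat.strong_induction_on generalizing H with
  | _ n ih =>
    by_cases ha : H.IsAcyclic
    · exact ⟨H, le_refl H, hc, ha⟩
    · rw [isAcyclic_iff_forall_adj_isBridge] at ha
      push_neg at ha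
      obtain ⟨v, w, hvw, hb⟩ := ha
      rw [isBridge_iff] at hb
      push_neg at hb
      have hr : (H \ fromEdgeSet {s(v,w)}).Reachable v w := hb
      have hc' : (H \ fromEdgeSet {s(v,w)}).Connected := by
        rw [connected_iff]
        refine ⟨fun x y => ?_, hc.nonempty⟩
        obtain ⟨p⟩ := hc.preconnected x y
        exact reachable_of_walk_delete' hr p
      have hES : (H \ fromEdgeSet {s(v,w)}).edgeSet = H.edgeSet \ {s(v,w)} := by
        simp [edgeSet_sdiff, edgeSet_fromEdgeSet, edgeSet_sdiff_sdiff_isDiag]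
      have hlt : (H \ fromEdgeSet {s(v,w)}).edgeSet.ncard < n := by
        rw [hES, ← hn]
        exact Set.ncard_diff_singleton_lt_of_mem hvw (Set.toFinite _)
      obtain ⟨T, hT, ht⟩ := ih _ hlt hc' rfl
      exact ⟨T, hT.trans sdiff_le, ht⟩

instance Subgraph.instFiniteAux {G : SimpleGraph V} : Finite G.Subgraph :=
  Finite.of_injective (fun H => (H.verts, H.Adj))
    (fun a b h => by
      obtain ⟨h1, h2⟩ := Prod.mk.injEq .. ▸ h
      exact SimpleGraph.Subgraph.ext h1 h2)

lemma tau_pos {G : SimpleGraph V} {B : Set V} (hc : (ind G B).Connected) :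
    0 < tau G (ind G B) := by
  classical
  have : Finite ↥B := (Set.toFinite B).to_subtype
  obtain ⟨T', hle, hT'⟩ := exists_tree_le' (H := (ind G B).coe)
    (Subgraph.connected_iff'.mp hc)
  let T : G.Subgraph :=
    { verts := B
      Adj := fun u v => ∃ (hu : u ∈ B) (hv : v ∈ B), T'.Adj ⟨u, hu⟩ ⟨v, hv⟩
      adj_sub := by
        rintro u v ⟨hu, hv, h⟩
        exact ((ind G B).adj_sub (hle h))
      edge_vert := by rintro u v ⟨hu, hv, h⟩; exact hu
      symm := by constructor; rintro u v ⟨hu, hv, h⟩; exact ⟨hv, hu, h.symm⟩ }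
  have hcoe : T.coe = T' := by
    ext a b
    constructor
    · rintro ⟨hu, hv, h⟩; exact h
    · intro h; exact ⟨a.2, b.2, h⟩
  have hmem : T ∈ {T : G.Subgraph | IsSpanningTreeOf G T (ind G B)} := by
    refine ⟨⟨subset_rfl, ?_⟩, rfl, by rw [hcoe]; exact hT'⟩
    rintro u v ⟨hu, hv, h⟩
    exact hle h
  exact (Set.ncard_pos (Set.toFinite _)).mpr ⟨T, hmem⟩

private lemma walk_cross' {α : Type*} {H : SimpleGraph α} {s : Set α} :
    ∀ {u v : α}, H.Walk u v → u ∈ s → v ∉ s → ∃ x ∈ s, ∃ y, y ∉ s ∧ H.Adj x y := by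
  intro u v p
  induction p with
  | nil => intro h h'; exact absurd h h'
  | @cons a b c h p ih =>
    intro ha hc
    by_cases hb : b ∈ s
    · exact ih hb hc
    · exact ⟨a, ha, b, hb, h⟩

lemma cross_nonempty {G : SimpleGraph V} {B B' : Set V} (hB : B.Nonempty) (hB' : B'.Nonempty)
    (hd : Disjoint B B') (hc : (ind G (B ∪ B')).Connected) :
    (crossEdges G B B').Nonempty := by
  obtain ⟨u, hu⟩ := hB
  obtain ⟨v, hv⟩ := hB'
  have hu' : u ∈ B ∪ B' := Or.inl hu
  have hv' : v ∈ B ∪ B' := Or.inr hv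
  obtain ⟨p⟩ := hc.preconnected ⟨u, hu'⟩ ⟨v, hv'⟩
  obtain ⟨x, hx, y, hy, hxy⟩ :=
    walk_cross' (s := {a : ↥(B ∪ B') | a.1 ∈ B}) p hu (fun hvB => hd.ne_of_mem hvB hv rfl)
  have hadj : G.Adj x.1 y.1 := (ind G (B ∪ B')).adj_sub hxy
  have hyB' : y.1 ∈ B' := y.2.resolve_left hy
  exact ⟨s(x.1, y.1), hadj, x.1, y.1, rfl, hx, hyB'⟩

lemma union_connected {G : SimpleGraph V} {B B' : Set V}
    (h : (ind G B).Connected) (h' : (ind G B').Connected)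
    {u v : V} (hu : u ∈ B) (hv : v ∈ B') (huv : G.Adj u v) :
    (ind G (B ∪ B')).Connected := by
  have h1 : ((ind G B) ⊔ G.subgraphOfAdj huv).Connected :=
    Subgraph.connected_sup h.preconnected (Subgraph.subgraphOfAdj_connected huv).preconnected ⟨u, hu, by simp⟩
  have h2 : (((ind G B) ⊔ G.subgraphOfAdj huv) ⊔ ind G B').Connected :=
    Subgraph.connected_sup h1.preconnected h'.preconnected ⟨v, Or.inr (by simp), hv⟩
  refine h2.mono ?_ ?_
  · refine sup_le (sup_le ?_ ?_) ?_
    · exact Subgraph.induce_mono le_rfl Set.subset_union_left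
    · constructor
      · intro x hx
        simp only [subgraphOfAdj_verts, Set.mem_insert_iff, Set.mem_singleton_iff] at hx
        rcases hx with rfl | rfl
        · exact Or.inl hu
        · exact Or.inr hv
      · intro a b hab
        simp only [subgraphOfAdj_adj] at hab
        rw [Sym2.eq_iff] at hab
        rcases hab with ⟨rfl, rfl⟩ | ⟨rfl, rfl⟩
        · exact ⟨Or.inl hu, Or.inr hv, huv⟩
        · exact ⟨Or.inr hv, Or.inl hu, huv.symm⟩
    · exact Subgraph.induce_mono le_rfl Set.subset_union_right
  · simp only [Subgraph.verts_sup, subgraphOfAdj_verts, Subgraph.induce_verts]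
    ext x
    simp only [Set.mem_union, Set.mem_insert_iff, Set.mem_singleton_iff]
    constructor
    · rintro ((hx | rfl | rfl) | hx)
      · exact Or.inl hx
      · exact Or.inl hu
      · exact Or.inr hv
      · exact Or.inr hx
    · rintro (hx | hx)
      · exact Or.inl (Or.inl hx)
      · exact Or.inr hx

lemma plan_ext {G : SimpleGraph V} {r : ℕ} {ξ ξ' : Plan G r} (h : ξ.blocks = ξ'.blocks) :
    ξ = ξ' := by
  cases ξ; cases ξ'; simp_all

instance {G : SimpleGraph V} {r : ℕ} : Finite (Plan G r) :=
  Finite.of_injective Plan.blocks (fun _ _ h => plan_ext h)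

lemma ancestor_structure {G : SimpleGraph V} {r : ℕ} (hr : 1 < r) (ξr : Plan G r)
    (ξp : Plan G (r-1)) (h : IsAncestor G ξp ξr) :
    ∃ Bk Bk' : Set V, Bk ∈ ξr.blocks ∧ Bk' ∈ ξr.blocks ∧ Bk ≠ Bk' ∧
      ξr.blocks \ ξp.blocks = {Bk, Bk'} ∧
      (Bk ∪ Bk') ∈ ξp.blocks \ ξr.blocks ∧
      ξp.blocks = (ξr.blocks \ {Bk, Bk'}) ∪ {Bk ∪ Bk'} ∧
      (crossEdges G Bk Bk').Nonempty := by
  obtain ⟨Bold, hBold⟩ := Set.ncard_eq_one.mp h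
  have hBoldp : Bold ∈ ξp.blocks := (hBold ▸ rfl : Bold ∈ ξp.blocks \ ξr.blocks).1
  have hBoldr : Bold ∉ ξr.blocks := (hBold ▸ rfl : Bold ∈ ξp.blocks \ ξr.blocks).2
  set C := ξp.blocks ∩ ξr.blocks with hC
  have hCeq : C = ξp.blocks \ {Bold} := by
    ext B
    constructor
    · rintro ⟨h1, h2⟩
      exact ⟨h1, fun hB => hBoldr (Set.mem_singleton_iff.mp hB ▸ h2)⟩
    · rintro ⟨h1, h2⟩
      refine ⟨h1, by_contra fun h3 => h2 ?_⟩
      have : B ∈ ξp.blocks \ ξr.blocks := ⟨h1, h3⟩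
      rw [hBold] at this
      exact this
  have hCcard : C.ncard = r - 2 := by
    rw [hCeq, Set.ncard_diff_singleton_of_mem hBoldp, ξp.ncard_blocks]
    omega
  have hCsub : C ⊆ ξr.blocks := Set.inter_subset_right
  have hNeq : ξr.blocks \ ξp.blocks = ξr.blocks \ C := by
    ext B
    constructor
    · rintro ⟨h1, h2⟩; exact ⟨h1, fun hB => h2 hB.1⟩
    · rintro ⟨h1, h2⟩; exact ⟨h1, fun hB => h2 ⟨hB, h1⟩⟩
  have hNcard : (ξr.blocks \ ξp.blocks).ncard = 2 := by
    rw [hNeq, Set.ncard_diff hCsub, ξr.ncard_blocks, hCcard]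
    omega
  obtain ⟨Bk, Bk', hne, hpair⟩ := Set.ncard_eq_two.mp hNcard
  have hBk : Bk ∈ ξr.blocks ∧ Bk ∉ ξp.blocks := by
    have : Bk ∈ ξr.blocks \ ξp.blocks := hpair ▸ Or.inl rfl
    exact this
  have hBk' : Bk' ∈ ξr.blocks ∧ Bk' ∉ ξp.blocks := by
    have : Bk' ∈ ξr.blocks \ ξp.blocks := hpair ▸ Or.inr rfl
    exact this
  have hunion : Bold = Bk ∪ Bk' := by
    ext x
    constructor
    · intro hx
      obtain ⟨B, hB, hxB⟩ := ξr.blocks_cover x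
      have hBN : B ∈ ξr.blocks \ ξp.blocks := by
        refine ⟨hB, fun hBp => ?_⟩
        have hBne : B ≠ Bold := fun hEq => hBoldr (hEq ▸ hB)
        exact (ξp.blocks_disjoint B hBp Bold hBoldp hBne).ne_of_mem hxB hx rfl
      rw [hpair] at hBN
      rcases hBN with rfl | rfl
      · exact Or.inl hxB
      · exact Or.inr hxB
    · intro hx
      obtain ⟨B, hB, hxB⟩ := ξp.blocks_cover x
      have hBD : B ∈ ξp.blocks \ ξr.blocks := by
        refine ⟨hB, fun hBr => ?_⟩
        rcases hx with hx | hx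
        · have hBne : B ≠ Bk := fun hEq => hBk.2 (hEq ▸ hB)
          exact (ξr.blocks_disjoint B hBr Bk hBk.1 hBne).ne_of_mem hxB hx rfl
        · have hBne : B ≠ Bk' := fun hEq => hBk'.2 (hEq ▸ hB)
          exact (ξr.blocks_disjoint B hBr Bk' hBk'.1 hBne).ne_of_mem hxB hx rfl
      rw [hBold] at hBD
      rw [hBD] at hxB
      exact hxB
  have hblocks : ξp.blocks = (ξr.blocks \ {Bk, Bk'}) ∪ {Bk ∪ Bk'} := by
    have hdiffC : ξr.blocks \ {Bk, Bk'} = C := by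
      rw [← hpair]
      ext B
      constructor
      · rintro ⟨h1, h2⟩
        refine ⟨?_, h1⟩
        by_contra h3
        exact h2 ⟨h1, h3⟩
      · rintro ⟨h1, h2⟩
        exact ⟨h2, fun h3 => h3.2 h1⟩
    rw [hdiffC, hCeq, ← hunion]
    ext B
    constructor
    · intro hB
      by_cases hBo : B = Bold
      · exact Or.inr (hBo ▸ rfl)
      · exact Or.inl ⟨hB, hBo⟩
    · rintro (⟨h1, _⟩ | h1)
      · exact h1
      · exact Set.mem_singleton_iff.mp h1 ▸ hBoldp
  have hcross : (crossEdges G Bk Bk').Nonempty := by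
    apply cross_nonempty (ξr.blocks_nonempty Bk hBk.1) (ξr.blocks_nonempty Bk' hBk'.1)
      (ξr.blocks_disjoint Bk hBk.1 Bk' hBk'.1 hne)
    rw [← hunion]
    exact ξp.blocks_connected Bold hBoldp
  exact ⟨Bk, Bk', hBk.1, hBk'.1, hne, hpair, hunion ▸ (hBold ▸ rfl), hblocks, hcross⟩

lemma union_not_mem {G : SimpleGraph V} {r : ℕ} (ξr : Plan G r) {Bk Bk' : Set V}
    (hBk : Bk ∈ ξr.blocks) (hBk' : Bk' ∈ ξr.blocks) (hne : Bk ≠ Bk') :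
    Bk ∪ Bk' ∉ ξr.blocks := by
  intro hmem
  obtain ⟨x, hx⟩ := ξr.blocks_nonempty Bk hBk
  obtain ⟨y, hy⟩ := ξr.blocks_nonempty Bk' hBk'
  have h1 : Bk = Bk ∪ Bk' := by
    by_contra hne2
    exact (ξr.blocks_disjoint Bk hBk _ hmem hne2).ne_of_mem hx (Or.inl hx) rfl
  have : y ∈ Bk := h1 ▸ Or.inr hy
  exact (ξr.blocks_disjoint Bk hBk Bk' hBk' hne).ne_of_mem this hy rfl

/-- construction of the merged ancestor plan -/
noncomputable def mergePlan {G : SimpleGraph V} {r : ℕ} (hr : 1 < r) (ξr : Plan G r)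
    {Bk Bk' : Set V} (hBk : Bk ∈ ξr.blocks) (hBk' : Bk' ∈ ξr.blocks) (hne : Bk ≠ Bk')
    (hcr : (crossEdges G Bk Bk').Nonempty) : Plan G (r - 1) where
  blocks := (ξr.blocks \ {Bk, Bk'}) ∪ {Bk ∪ Bk'}
  ncard_blocks := by
    have hnm := union_not_mem ξr hBk hBk' hne
    have hd : Disjoint (ξr.blocks \ {Bk, Bk'}) {Bk ∪ Bk'} := by
      rw [Set.disjoint_singleton_right]
      exact fun h => hnm h.1
    rw [Set.ncard_union_eq hd (Set.toFinite _) (Set.toFinite _), Set.ncard_singleton,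
      Set.ncard_diff (by rintro B (rfl | rfl) <;> assumption) (Set.toFinite _),
      ξr.ncard_blocks, Set.ncard_pair hne]
    omega
  blocks_nonempty := by
    rintro B (hB | hB)
    · exact ξr.blocks_nonempty B hB.1
    · rw [Set.mem_singleton_iff] at hB
      obtain ⟨x, hx⟩ := ξr.blocks_nonempty Bk hBk
      exact hB ▸ ⟨x, Or.inl hx⟩
  blocks_disjoint := by
    have key : ∀ B ∈ ξr.blocks \ {Bk, Bk'}, Disjoint B (Bk ∪ Bk') := by
      rintro B ⟨hB, hB2⟩
      simp only [Set.mem_insert_iff, Set.mem_singleton_iff, not_or] at hB2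
      exact Set.disjoint_union_right.mpr
        ⟨ξr.blocks_disjoint B hB Bk hBk hB2.1, ξr.blocks_disjoint B hB Bk' hBk' hB2.2⟩
    rintro B (hB | hB) B' (hB' | hB') hBB'
    · exact ξr.blocks_disjoint B hB.1 B' hB'.1 hBB'
    · exact Set.mem_singleton_iff.mp hB' ▸ key B hB
    · exact (Set.mem_singleton_iff.mp hB ▸ (key B' hB')).symm
    · exact absurd (hB.trans hB'.symm) hBB'
  blocks_cover := by
    intro v
    obtain ⟨B, hB, hvB⟩ := ξr.blocks_cover v
    by_cases hB2 : B = Bk ∨ B = Bk'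
    · refine ⟨Bk ∪ Bk', Or.inr rfl, ?_⟩
      rcases hB2 with rfl | rfl
      · exact Or.inl hvB
      · exact Or.inr hvB
    · exact ⟨B, Or.inl ⟨hB, hB2⟩, hvB⟩
  blocks_connected := by
    rintro B (hB | hB)
    · exact ξr.blocks_connected B hB.1
    · rw [Set.mem_singleton_iff] at hB
      subst hB
      obtain ⟨e, he, u, v, rfl, hu, hv⟩ := hcr
      exact union_connected (ξr.blocks_connected Bk hBk) (ξr.blocks_connected Bk' hBk')
        hu hv (G.mem_edgeSet.mp he)

lemma mergePlan_ancestor {G : SimpleGraph V} {r : ℕ} (hr : 1 < r) (ξr : Plan G r)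
    {Bk Bk' : Set V} (hBk : Bk ∈ ξr.blocks) (hBk' : Bk' ∈ ξr.blocks) (hne : Bk ≠ Bk')
    (hcr : (crossEdges G Bk Bk').Nonempty) :
    IsAncestor G (mergePlan hr ξr hBk hBk' hne hcr) ξr ∧
      ξr.blocks \ (mergePlan hr ξr hBk hBk' hne hcr).blocks = {Bk, Bk'} := by
  have hnm := union_not_mem ξr hBk hBk' hne
  have hdiff : (mergePlan hr ξr hBk hBk' hne hcr).blocks \ ξr.blocks = {Bk ∪ Bk'} := by
    show ((ξr.blocks \ {Bk, Bk'}) ∪ {Bk ∪ Bk'}) \ ξr.blocks = {Bk ∪ Bk'}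
    ext B
    constructor
    · rintro ⟨hB1 | hB1, hB2⟩
      · exact absurd hB1.1 hB2
      · exact hB1
    · rintro rfl
      exact ⟨Or.inr rfl, hnm⟩
  constructor
  · rw [IsAncestor, hdiff, Set.ncard_singleton]
  · show ξr.blocks \ ((ξr.blocks \ {Bk, Bk'}) ∪ {Bk ∪ Bk'}) = {Bk, Bk'}
    ext B
    constructor
    · rintro ⟨h1, h2⟩
      by_contra hBP
      exact h2 (Or.inl ⟨h1, hBP⟩)
    · intro hBP
      have hBr : B ∈ ξr.blocks := by rcases hBP with rfl | rfl <;> assumption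
      refine ⟨hBr, ?_⟩
      rintro (h | h)
      · exact h.2 hBP
      · exact hnm ((Set.mem_singleton_iff.mp h) ▸ hBr)


/-- With `f(ξr) = Σ_{ξp ∈ A₁(ξr)} (γ(ξp)/Z)·M(ξr|ξp)` and `S` the
unordered-adjacent-pair sum, if `S ≠ 0` then `γ(ξr)/(Z·f(ξr)) = K·S⁻¹`. -/
theorem stmt_9 (G : SimpleGraph V) (r : ℕ) (hr : 1 < r) (ξr : Plan G r)
    (W : Set (Set V) → ℝ) (hW : ∀ P, 0 ≤ W P) (hWr : 0 < W ξr.blocks)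
    (ρ : ℝ) (K : ℝ) (hK : 0 < K) (Z : ℝ) (hZ : 0 < Z)
    (φ : Set V → Set (Set V) → ℝ)
    (γ : Set (Set V) → ℝ)
    (hγ : ∀ P : Set (Set V), γ P = W P * ∏ᶠ B ∈ P, (tau G (ind G B) : ℝ) ^ ρ)
    (M : Plan G (r - 1) → ℝ)
    (hM : ∀ ξp : Plan G (r - 1), IsAncestor G ξp ξr →
      ∀ Bold ∈ ξp.blocks \ ξr.blocks,
        ∀ Bk ∈ ξr.blocks \ ξp.blocks, ∀ Bk' ∈ ξr.blocks \ ξp.blocks, Bk ≠ Bk' →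
          M ξp = φ Bold ξp.blocks *
            ((tau G (ind G Bk) : ℝ) * (tau G (ind G Bk') : ℝ) *
              ((crossEdges G Bk Bk').ncard : ℝ)) / (K * (tau G (ind G Bold) : ℝ)))
    (g : Set (Set V) → ℝ)
    (hg : ∀ Bk ∈ ξr.blocks, ∀ Bk' ∈ ξr.blocks, Bk ≠ Bk' →
      (crossEdges G Bk Bk').Nonempty →
      g {Bk, Bk'} =
        φ (Bk ∪ Bk') ((ξr.blocks \ {Bk, Bk'}) ∪ {Bk ∪ Bk'}) *
          (W ((ξr.blocks \ {Bk, Bk'}) ∪ {Bk ∪ Bk'}) / W ξr.blocks) *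
          ((tau G (ind G (Bk ∪ Bk')) : ℝ) /
              ((tau G (ind G Bk) : ℝ) * (tau G (ind G Bk') : ℝ))) ^ (ρ - 1) *
          ((crossEdges G Bk Bk').ncard : ℝ))
    (f : ℝ)
    (hf : f = ∑ᶠ ξp ∈ {ξp : Plan G (r - 1) | IsAncestor G ξp ξr},
      (γ ξp.blocks / Z) * M ξp)
    (S : ℝ)
    (hS : S = ∑ᶠ P ∈ {P : Set (Set V) | ∃ Bk ∈ ξr.blocks, ∃ Bk' ∈ ξr.blocks,
        Bk ≠ Bk' ∧ (crossEdges G Bk Bk').Nonempty ∧ P = {Bk, Bk'}}, g P)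
    (hSne : S ≠ 0) :
    γ ξr.blocks / (Z * f) = K * S⁻¹ := by
  classical
  have hγr_pos : 0 < γ ξr.blocks := by
    rw [hγ]
    refine mul_pos hWr ?_
    rw [finprod_mem_eq_finite_toFinset_prod _ (Set.toFinite _)]
    refine Finset.prod_pos fun B hB => ?_
    have hBmem : B ∈ ξr.blocks := by simpa using hB
    exact Real.rpow_pos_of_pos
      (Nat.cast_pos.mpr (tau_pos (ξr.blocks_connected B hBmem))) ρ
  have hterm : ∀ ξp ∈ {ξp : Plan G (r - 1) | IsAncestor G ξp ξr},
      γ ξp.blocks / Z * M ξp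
        = γ ξr.blocks / (Z * K) * g (ξr.blocks \ ξp.blocks) := by
    intro ξp hanc
    obtain ⟨Bk, Bk', hBk, hBk', hne, hpair, hUmem, hblocks, hcross⟩ :=
      ancestor_structure hr ξr ξp hanc
    have hMval := hM ξp hanc (Bk ∪ Bk') hUmem Bk (by rw [hpair]; exact Or.inl rfl)
      Bk' (by rw [hpair]; exact Or.inr rfl) hne
    have hgval := hg Bk hBk Bk' hBk' hne hcross
    rw [hpair, hgval, hMval, hγ ξp.blocks, hγ ξr.blocks, ← hblocks]
    have hUnm : Bk ∪ Bk' ∉ ξr.blocks \ {Bk, Bk'} :=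
      fun h => union_not_mem ξr hBk hBk' hne h.1
    have hd1 : Disjoint (ξr.blocks \ {Bk, Bk'}) {Bk ∪ Bk'} :=
      Set.disjoint_singleton_right.mpr hUnm
    have hsub : {Bk, Bk'} ⊆ ξr.blocks := by rintro B (rfl | rfl) <;> assumption
    have hp1 : ∏ᶠ B ∈ ξp.blocks, (tau G (ind G B) : ℝ) ^ ρ
        = (∏ᶠ B ∈ ξr.blocks \ {Bk, Bk'}, (tau G (ind G B) : ℝ) ^ ρ) *
          (tau G (ind G (Bk ∪ Bk')) : ℝ) ^ ρ := by
      rw [hblocks, finprod_mem_union hd1 (Set.toFinite _) (Set.toFinite _),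
        finprod_mem_singleton]
    have hp2 : ∏ᶠ B ∈ ξr.blocks, (tau G (ind G B) : ℝ) ^ ρ
        = (∏ᶠ B ∈ ξr.blocks \ {Bk, Bk'}, (tau G (ind G B) : ℝ) ^ ρ) *
          ((tau G (ind G Bk) : ℝ) ^ ρ * (tau G (ind G Bk') : ℝ) ^ ρ) := by
      conv_lhs => rw [← Set.diff_union_of_subset hsub]
      rw [finprod_mem_union disjoint_sdiff_self_left (Set.toFinite _) (Set.toFinite _),
        finprod_mem_pair hne]
    rw [hp1, hp2]
    have hA : (0:ℝ) < (tau G (ind G Bk) : ℝ) :=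
      Nat.cast_pos.mpr (tau_pos (ξr.blocks_connected Bk hBk))
    have hB : (0:ℝ) < (tau G (ind G Bk') : ℝ) :=
      Nat.cast_pos.mpr (tau_pos (ξr.blocks_connected Bk' hBk'))
    have hC : (0:ℝ) < (tau G (ind G (Bk ∪ Bk')) : ℝ) :=
      Nat.cast_pos.mpr (tau_pos (ξp.blocks_connected _ hUmem.1))
    set A := (tau G (ind G Bk) : ℝ) with hAdef
    set Bv := (tau G (ind G Bk') : ℝ) with hBdef
    set Cv := (tau G (ind G (Bk ∪ Bk')) : ℝ) with hCdef
    have h1 : (Cv / (A * Bv)) ^ (ρ - 1)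
        = (Cv ^ ρ / Cv) / ((A ^ ρ / A) * (Bv ^ ρ / Bv)) := by
      rw [Real.div_rpow hC.le (mul_pos hA hB).le, Real.mul_rpow hA.le hB.le,
        Real.rpow_sub hC, Real.rpow_sub hA, Real.rpow_sub hB, Real.rpow_one,
        Real.rpow_one, Real.rpow_one]
    rw [h1]
    have hAρ : 0 < A ^ ρ := Real.rpow_pos_of_pos hA ρ
    have hBρ : 0 < Bv ^ ρ := Real.rpow_pos_of_pos hB ρ
    field_simp
  have hkey : ∀ ξp ∈ {ξp : Plan G (r - 1) | IsAncestor G ξp ξr}, ξp.blocks =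
      (ξr.blocks \ (ξr.blocks \ ξp.blocks)) ∪ {⋃₀ (ξr.blocks \ ξp.blocks)} := by
    intro ξp hanc
    obtain ⟨Bk, Bk', _, _, _, hpair, _, hblocks, _⟩ := ancestor_structure hr ξr ξp hanc
    rw [hpair, Set.sUnion_pair]
    exact hblocks
  have hbij : Set.BijOn (fun ξp : Plan G (r - 1) => ξr.blocks \ ξp.blocks)
      {ξp : Plan G (r - 1) | IsAncestor G ξp ξr}
      {P : Set (Set V) | ∃ Bk ∈ ξr.blocks, ∃ Bk' ∈ ξr.blocks,
        Bk ≠ Bk' ∧ (crossEdges G Bk Bk').Nonempty ∧ P = {Bk, Bk'}} := by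
    refine ⟨?_, ?_, ?_⟩
    · intro ξp hanc
      obtain ⟨Bk, Bk', hBk, hBk', hne, hpair, _, _, hcross⟩ :=
        ancestor_structure hr ξr ξp hanc
      exact ⟨Bk, hBk, Bk', hBk', hne, hcross, hpair⟩
    · intro ξp1 h1 ξp2 h2 heq
      apply plan_ext
      rw [hkey ξp1 h1, hkey ξp2 h2]
      simp only at heq
      rw [heq]
    · rintro P ⟨Bk, hBk, Bk', hBk', hne, hcross, rfl⟩
      obtain ⟨hanc, himg⟩ := mergePlan_ancestor hr ξr hBk hBk' hne hcross
      exact ⟨mergePlan hr ξr hBk hBk' hne hcross, hanc, himg⟩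
  have hfS : f = γ ξr.blocks / (Z * K) * S := by
    rw [hf, hS, finsum_mem_eq_of_bijOn (g := fun P => γ ξr.blocks / (Z * K) * g P) _ hbij hterm,
      finsum_mem_eq_finite_toFinset_sum _ (Set.toFinite _),
      finsum_mem_eq_finite_toFinset_sum _ (Set.toFinite _), Finset.mul_sum]
  rw [hfS]
  rw [div_eq_iff (by positivity), mul_comm K S⁻¹]
  field_simp


end Redist
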